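/- Let r₁,…,r₄ ∈ ℝ³ be the unit vectors to the vertices of a regular tetrahedron, and let g_{m,ℓ} = (r_m − r_ℓ)/‖r_m − r_ℓ‖ for m ≠ ℓ. Then for every unit vector v ∈ ℝ³ there exist m ≠ ℓ such that g_{m,ℓ}·v ≥ 1/√2. -/

import Mathlib

theorem tetrahedron_edge_quantization (r : Fin 4 → EuclideanSpace ℝ (Fin 3))
    (hnorm : ∀ m, ‖r m‖ = 1)
    (hinner : ∀ m ℓ, m ≠ ℓ → (inner ℝ (r m) (r ℓ) : ℝ) = -1/3)
    (hsum : ∑ m, r m = 0)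
    (g : Fin 4 → Fin 4 → EuclideanSpace ℝ (Fin 3))
    (hg : ∀ m ℓ, m ≠ ℓ → g m ℓ = ‖r m - r ℓ‖⁻¹ • (r m - r ℓ))
    (v : EuclideanSpace ℝ (Fin 3)) (hv : ‖v‖ = 1) :
    ∃ m ℓ, m ≠ ℓ ∧ (1 / Real.sqrt 2) ≤ (inner ℝ (g m ℓ) v : ℝ) := by
  set a : Fin 4 → ℝ := fun m => (inner ℝ (r m) v : ℝ) with ha
  have hself : ∀ m, (inner ℝ (r m) (r m) : ℝ) = 1 := by
    intro m
    rw [real_inner_self_eq_norm_sq, hnorm]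
    norm_num
  have hsa : ∑ m, a m = 0 := by
    have h : (inner ℝ (∑ m, r m) v : ℝ) = 0 := by rw [hsum, inner_zero_left]
    rw [sum_inner] at h
    exact h
  have key : ∀ k, (inner ℝ (r k) (∑ m, a m • r m) : ℝ) = (4/3) * a k := by
    intro k
    rw [inner_sum]
    simp only [real_inner_smul_right]
    rw [← Finset.add_sum_erase Finset.univ _ (Finset.mem_univ k), hself]
    have h1 : ∑ m ∈ Finset.univ.erase k, a m * (inner ℝ (r k) (r m) : ℝ)
        = ∑ m ∈ Finset.univ.erase k, a m * (-1/3) := by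
      refine Finset.sum_congr rfl fun m hm => ?_
      rw [hinner k m (Ne.symm (Finset.ne_of_mem_erase hm))]
    have h2 : a k + ∑ m ∈ Finset.univ.erase k, a m = 0 := by
      rw [Finset.add_sum_erase Finset.univ a (Finset.mem_univ k), hsa]
    have h3 : ∑ m ∈ Finset.univ.erase k, a m = - a k := by linarith
    rw [h1, ← Finset.sum_mul, h3]
    ring
  -- linear independence of r 0, r 1, r 2
  have li : LinearIndependent ℝ ![r 0, r 1, r 2] := by
    rw [Fintype.linearIndependent_iff]
    intro f hf i
    have h0 : ∀ k : Fin 4, (inner ℝ (r k) (∑ j : Fin 3, f j • ![r 0, r 1, r 2] j) : ℝ) = 0 := by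
      intro k; rw [hf, inner_zero_right]
    have e0 := h0 0
    have e1 := h0 1
    have e2 := h0 2
    simp only [inner_sum, inner_add_right, real_inner_smul_right, Fin.sum_univ_three,
      Matrix.cons_val_zero, Matrix.cons_val_one, Matrix.head_cons,
      Matrix.cons_val_two, Matrix.tail_cons] at e0 e1 e2
    rw [hself, hinner _ _ (by decide : (0:Fin 4) ≠ 1), hinner _ _ (by decide : (0:Fin 4) ≠ 2)] at e0
    rw [hinner _ _ (by decide : (1:Fin 4) ≠ 0), hself, hinner _ _ (by decide : (1:Fin 4) ≠ 2)] at e1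
    rw [hinner _ _ (by decide : (2:Fin 4) ≠ 0), hinner _ _ (by decide : (2:Fin 4) ≠ 1), hself] at e2
    have hf0 : f 0 = 0 := by linarith
    have hf1 : f 1 = 0 := by linarith
    have hf2 : f 2 = 0 := by linarith
    fin_cases i
    · exact hf0
    · exact hf1
    · exact hf2
  have hsp : Submodule.span ℝ (Set.range ![r 0, r 1, r 2]) = ⊤ := by
    apply Submodule.eq_top_of_finrank_eq
    rw [finrank_span_eq_card li]
    simp [finrank_euclideanSpace]
  obtain ⟨c, hc⟩ := (Submodule.mem_span_range_iff_exists_fun ℝ).mp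
    (hsp ▸ Submodule.mem_top : v ∈ Submodule.span ℝ (Set.range ![r 0, r 1, r 2]))
  set u : EuclideanSpace ℝ (Fin 3) := v - (3/4 : ℝ) • ∑ m, a m • r m with hu_def
  have hur : ∀ k, (inner ℝ (r k) u : ℝ) = 0 := by
    intro k
    rw [hu_def, inner_sub_right, real_inner_smul_right, key]
    show a k - 3 / 4 * (4 / 3 * a k) = 0
    ring
  have hur' : ∀ k, (inner ℝ u (r k) : ℝ) = 0 := by
    intro k; rw [real_inner_comm]; exact hur k
  have huv : (inner ℝ u v : ℝ) = 0 := by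
    rw [← hc, inner_sum]
    simp only [real_inner_smul_right]
    have h4 : ∀ j : Fin 3, (inner ℝ u (![r 0, r 1, r 2] j) : ℝ) = 0 := by
      intro j
      fin_cases j <;>
        simp only [Matrix.cons_val_zero, Matrix.cons_val_one, Matrix.head_cons,
          Matrix.cons_val_two, Matrix.tail_cons] <;> exact hur' _
    simp [h4]
  have huu : (inner ℝ u u : ℝ) = 0 := by
    nth_rewrite 2 [hu_def]
    rw [inner_sub_right, real_inner_smul_right, inner_sum, huv]
    simp only [real_inner_smul_right, hur', mul_zero, Finset.sum_const_zero]
    ring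
  have hu0 : u = 0 := by rwa [inner_self_eq_zero] at huu
  have hvrep : v = (3/4 : ℝ) • ∑ m, a m • r m := sub_eq_zero.mp hu0
  have hsum_sq : ∑ m, (a m)^2 = 4/3 := by
    have h1 : (inner ℝ v v : ℝ) = 1 := by
      rw [real_inner_self_eq_norm_sq, hv]; norm_num
    nth_rewrite 2 [hvrep] at h1
    rw [real_inner_smul_right, inner_sum] at h1
    simp only [real_inner_smul_right] at h1
    have hcomm : ∀ m, (inner ℝ v (r m) : ℝ) = a m := fun m => real_inner_comm _ _
    simp only [hcomm] at h1
    have : ∑ m, a m * a m = 4/3 := by linarith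
    calc ∑ m, (a m)^2 = ∑ m, a m * a m := by simp [sq]
      _ = 4/3 := this
  have hsum_a4 : a 0 + a 1 + a 2 + a 3 = 0 := by
    have := hsa; rwa [Fin.sum_univ_four] at this
  have hsum_sq4 : a 0 ^2 + a 1 ^2 + a 2 ^2 + a 3 ^2 = 4/3 := by
    have := hsum_sq; rwa [Fin.sum_univ_four] at this
  obtain ⟨m0, -, hm0⟩ := Finset.exists_max_image (Finset.univ : Finset (Fin 4)) a ⟨0, by simp⟩
  obtain ⟨l0, -, hl0⟩ := Finset.exists_min_image (Finset.univ : Finset (Fin 4)) a ⟨0, by simp⟩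
  set M := a m0 with hM
  set μ := a l0 with hμ
  have hMμ : ∀ m, μ ≤ a m ∧ a m ≤ M := fun m => ⟨hl0 m (by simp), hm0 m (by simp)⟩
  have hprod : μ * M ≤ -1/3 := by
    have h0 := hMμ 0; have h1 := hMμ 1; have h2 := hMμ 2; have h3 := hMμ 3
    nlinarith [mul_nonneg (sub_nonneg.mpr h0.1) (sub_nonneg.mpr h0.2),
      mul_nonneg (sub_nonneg.mpr h1.1) (sub_nonneg.mpr h1.2),
      mul_nonneg (sub_nonneg.mpr h2.1) (sub_nonneg.mpr h2.2),
      mul_nonneg (sub_nonneg.mpr h3.1) (sub_nonneg.mpr h3.2)]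
  have hdiff_sq : (4:ℝ)/3 ≤ (M - μ)^2 := by nlinarith [sq_nonneg (M + μ)]
  have hne : m0 ≠ l0 := by
    intro h
    rw [hM, hμ, h, sub_self] at hdiff_sq
    norm_num at hdiff_sq
  have hd : ‖r m0 - r l0‖ = Real.sqrt (8/3) := by
    have hsq : ‖r m0 - r l0‖^2 = 8/3 := by
      rw [norm_sub_sq_real, hnorm, hnorm, hinner _ _ hne]; norm_num
    rw [← Real.sqrt_sq (norm_nonneg _), hsq]
  refine ⟨m0, l0, hne, ?_⟩
  rw [hg _ _ hne, real_inner_smul_left, inner_sub_left, hd]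
  have hMμnn : 0 ≤ M - μ := by
    have := hMμ 0; linarith [this.1, this.2]
  have hdiff : Real.sqrt (8/3) / Real.sqrt 2 ≤ M - μ := by
    have h3 : Real.sqrt (8/3) / Real.sqrt 2 = Real.sqrt (4/3) := by
      rw [← Real.sqrt_div (by norm_num : (0:ℝ) ≤ 8/3)]
      norm_num
    rw [h3]
    calc Real.sqrt (4/3) ≤ Real.sqrt ((M-μ)^2) := Real.sqrt_le_sqrt hdiff_sq
      _ = M - μ := Real.sqrt_sq hMμnn
  have hpos : 0 < Real.sqrt (8/3) := Real.sqrt_pos.mpr (by norm_num)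
  have h2pos : 0 < Real.sqrt 2 := Real.sqrt_pos.mpr (by norm_num)
  have heq : (inner ℝ (r m0) v : ℝ) - (inner ℝ (r l0) v : ℝ) = M - μ := rfl
  rw [heq]
  rw [div_le_iff₀ h2pos] at hdiff
  calc (1 : ℝ) / Real.sqrt 2 = (Real.sqrt (8/3))⁻¹ * (Real.sqrt (8/3) / Real.sqrt 2) := by
        field_simp
    _ ≤ (Real.sqrt (8/3))⁻¹ * (M - μ) := by
        apply mul_le_mul_of_nonneg_left _ (le_of_lt (inv_pos.mpr hpos))
        rw [div_le_iff₀ h2pos]; exact hdiff
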